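/- The curvature E satisfies the algebraic Bianchi identity: the antisymmetrization of E_{αβγ,εδ} over the four indices α, β, γ, ε vanishes, i.e. E_{[αβγ,ε]δ} = 0, provided T has the cyclic symmetry T_{[αβγ]} = 0. -/

import Mathlib

open scoped BigOperators

/-- Partial derivative in the μ-th coordinate direction on ℝ^D. -/
noncomputable def pd {D : ℕ} (μ : Fin D) (f : (Fin D → ℝ) → ℝ) : (Fin D → ℝ) → ℝ :=
  fun x => fderiv ℝ f x (Pi.single μ 1)

/-- Weight-one antisymmetrization over three indices. -/
noncomputable def alt3 {D : ℕ} (f : Fin D → Fin D → Fin D → ℝ) (a b c : Fin D) : ℝ :=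
  (1/6) * (f a b c - f b a c + f b c a - f c b a + f c a b - f a c b)

/-- Weight-one antisymmetrization over four indices. -/
noncomputable def alt4 {D : ℕ} (f : Fin D → Fin D → Fin D → Fin D → ℝ)
    (a b c d : Fin D) : ℝ :=
  (1/24) * ∑ σ : Equiv.Perm (Fin 4),
    ((Equiv.Perm.sign σ : ℤ) : ℝ) *
      f (![a,b,c,d] (σ 0)) (![a,b,c,d] (σ 1)) (![a,b,c,d] (σ 2)) (![a,b,c,d] (σ 3))

/-- Minkowski metric (mostly plus) on ℝ^D; numerically equal to its inverse. -/
noncomputable def eta (D : ℕ) : Fin D → Fin D → ℝ := fun μ ν =>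
  if μ = ν then (if (μ : ℕ) = 0 then -1 else 1) else 0

/-! ### Auxiliary analytic lemmas -/

lemma pd_smooth {D : ℕ} (μ : Fin D) (f : (Fin D → ℝ) → ℝ) (hf : ContDiff ℝ (⊤ : ℕ∞) f) :
    ContDiff ℝ (⊤ : ℕ∞) (pd μ f) := by
  have h1 : ContDiff ℝ (⊤ : ℕ∞) (fderiv ℝ f) := hf.fderiv_right (by exact_mod_cast le_top)
  exact h1.clm_apply contDiff_const

lemma pd_comm {D : ℕ} (μ ν : Fin D) (f : (Fin D → ℝ) → ℝ) (hf : ContDiff ℝ (⊤ : ℕ∞) f)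
    (x : Fin D → ℝ) : pd μ (pd ν f) x = pd ν (pd μ f) x := by
  have hsymm : IsSymmSndFDerivAt ℝ f x :=
    hf.contDiffAt.isSymmSndFDerivAt (by rw [minSmoothness_of_isRCLikeNormedField]; exact WithTop.coe_le_coe.mpr le_top)
  have hdf : ContDiff ℝ (⊤ : ℕ∞) (fderiv ℝ f) := hf.fderiv_right (by exact_mod_cast le_top)
  have hd : DifferentiableAt ℝ (fderiv ℝ f) x :=
    (hdf.differentiable (by simp)).differentiableAt
  have key : ∀ v w : Fin D → ℝ,
      fderiv ℝ (fun y => fderiv ℝ f y v) x w = fderiv ℝ (fderiv ℝ f) x w v := by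
    intro v w
    rw [fderiv_clm_apply hd (differentiableAt_const v)]
    simp
  unfold pd
  rw [key, key]
  exact hsymm _ _

lemma pd_neg {D : ℕ} (μ : Fin D) (f : (Fin D → ℝ) → ℝ) (x : Fin D → ℝ) :
    pd μ (fun y => -(f y)) x = -(pd μ f x) := by
  unfold pd; rw [fderiv_fun_neg]; simp

lemma pd_add {D : ℕ} (μ : Fin D) (f g : (Fin D → ℝ) → ℝ) (x : Fin D → ℝ)
    (hf : DifferentiableAt ℝ f x) (hg : DifferentiableAt ℝ g x) :
    pd μ (fun y => f y + g y) x = pd μ f x + pd μ g x := by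
  unfold pd; rw [fderiv_fun_add hf hg]; simp

lemma pd_add3 {D : ℕ} (μ : Fin D) (f g h : (Fin D → ℝ) → ℝ) (x : Fin D → ℝ)
    (hf : DifferentiableAt ℝ f x) (hg : DifferentiableAt ℝ g x)
    (hh : DifferentiableAt ℝ h x) :
    pd μ (fun y => f y + g y + h y) x = pd μ f x + pd μ g x + pd μ h x := by
  rw [pd_add μ (fun y => f y + g y) h x (hf.add hg) hh, pd_add μ f g x hf hg]

/-! ### Auxiliary algebraic lemmas about `alt4` -/

lemma alt4_perm {D : ℕ} (f : Fin D → Fin D → Fin D → Fin D → ℝ) (τ : Equiv.Perm (Fin 4))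
    (a b c d : Fin D) :
    alt4 (fun p q r s => f (![p,q,r,s] (τ 0)) (![p,q,r,s] (τ 1)) (![p,q,r,s] (τ 2))
      (![p,q,r,s] (τ 3))) a b c d
      = ((Equiv.Perm.sign τ : ℤ) : ℝ) * alt4 f a b c d := by
  set v : Fin 4 → Fin D := ![a,b,c,d] with hv
  have hu : ∀ (σ : Equiv.Perm (Fin 4)) (i : Fin 4),
      ![v (σ 0), v (σ 1), v (σ 2), v (σ 3)] i = v (σ i) := by
    intro σ i; fin_cases i <;> rfl
  have main : ∑ σ : Equiv.Perm (Fin 4),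
      ((Equiv.Perm.sign σ : ℤ) : ℝ) * f (v (σ (τ 0))) (v (σ (τ 1))) (v (σ (τ 2))) (v (σ (τ 3)))
      = ((Equiv.Perm.sign τ : ℤ) : ℝ) * ∑ σ : Equiv.Perm (Fin 4),
        ((Equiv.Perm.sign σ : ℤ) : ℝ) * f (v (σ 0)) (v (σ 1)) (v (σ 2)) (v (σ 3)) := by
    rw [Finset.mul_sum,
      ← Equiv.sum_comp (Equiv.mulRight τ) (fun σ : Equiv.Perm (Fin 4) =>
        ((Equiv.Perm.sign τ : ℤ) : ℝ) *
          (((Equiv.Perm.sign σ : ℤ) : ℝ) * f (v (σ 0)) (v (σ 1)) (v (σ 2)) (v (σ 3))))]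
    apply Finset.sum_congr rfl
    intro σ _
    simp only [Equiv.coe_mulRight, Equiv.Perm.mul_apply, Equiv.Perm.sign_mul]
    push_cast
    rcases Int.units_eq_one_or (Equiv.Perm.sign τ) with h | h <;>
      rcases Int.units_eq_one_or (Equiv.Perm.sign σ) with h' | h' <;>
      rw [h, h'] <;> push_cast <;> ring
  unfold alt4
  beta_reduce
  simp only [← hv, hu]
  rw [main]
  ring

lemma alt4_swap03 {D : ℕ} (f : Fin D → Fin D → Fin D → Fin D → ℝ) (a b c d : Fin D) :
    alt4 (fun p q r s => f s q r p) a b c d = - alt4 f a b c d := by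
  have h := alt4_perm f (Equiv.swap 0 3) a b c d
  rw [show ((Equiv.swap (0:Fin 4) 3) 0) = 3 from by decide,
      show ((Equiv.swap (0:Fin 4) 3) 1) = 1 from by decide,
      show ((Equiv.swap (0:Fin 4) 3) 2) = 2 from by decide,
      show ((Equiv.swap (0:Fin 4) 3) 3) = 0 from by decide,
      show (Equiv.Perm.sign (Equiv.swap (0:Fin 4) 3)) = -1 from by decide] at h
  simpa using h

lemma alt4_swap13 {D : ℕ} (f : Fin D → Fin D → Fin D → Fin D → ℝ) (a b c d : Fin D) :
    alt4 (fun p q r s => f p s r q) a b c d = - alt4 f a b c d := by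
  have h := alt4_perm f (Equiv.swap 1 3) a b c d
  rw [show ((Equiv.swap (1:Fin 4) 3) 0) = 0 from by decide,
      show ((Equiv.swap (1:Fin 4) 3) 1) = 3 from by decide,
      show ((Equiv.swap (1:Fin 4) 3) 2) = 2 from by decide,
      show ((Equiv.swap (1:Fin 4) 3) 3) = 1 from by decide,
      show (Equiv.Perm.sign (Equiv.swap (1:Fin 4) 3)) = -1 from by decide] at h
  simpa using h

lemma alt4_swap23 {D : ℕ} (f : Fin D → Fin D → Fin D → Fin D → ℝ) (a b c d : Fin D) :
    alt4 (fun p q r s => f p q s r) a b c d = - alt4 f a b c d := by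
  have h := alt4_perm f (Equiv.swap 2 3) a b c d
  rw [show ((Equiv.swap (2:Fin 4) 3) 0) = 0 from by decide,
      show ((Equiv.swap (2:Fin 4) 3) 1) = 1 from by decide,
      show ((Equiv.swap (2:Fin 4) 3) 2) = 3 from by decide,
      show ((Equiv.swap (2:Fin 4) 3) 3) = 2 from by decide,
      show (Equiv.Perm.sign (Equiv.swap (2:Fin 4) 3)) = -1 from by decide] at h
  simpa using h

lemma alt4_swap01 {D : ℕ} (f : Fin D → Fin D → Fin D → Fin D → ℝ) (a b c d : Fin D) :
    alt4 (fun p q r s => f q p r s) a b c d = - alt4 f a b c d := by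
  have h := alt4_perm f (Equiv.swap 0 1) a b c d
  rw [show ((Equiv.swap (0:Fin 4) 1) 0) = 1 from by decide,
      show ((Equiv.swap (0:Fin 4) 1) 1) = 0 from by decide,
      show ((Equiv.swap (0:Fin 4) 1) 2) = 2 from by decide,
      show ((Equiv.swap (0:Fin 4) 1) 3) = 3 from by decide,
      show (Equiv.Perm.sign (Equiv.swap (0:Fin 4) 1)) = -1 from by decide] at h
  simpa using h

lemma alt4_cyc012 {D : ℕ} (f : Fin D → Fin D → Fin D → Fin D → ℝ) (a b c d : Fin D) :
    alt4 (fun p q r s => f r p q s) a b c d = alt4 f a b c d := by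
  have h := alt4_perm f (Equiv.swap (0:Fin 4) 1 * Equiv.swap 0 2) a b c d
  have e : ∀ i : Fin 4, ((Equiv.swap (0:Fin 4) 1 * Equiv.swap 0 2 : Equiv.Perm (Fin 4))) i = ![2,0,1,3] i := by decide
  have es : Equiv.Perm.sign (Equiv.swap (0:Fin 4) 1 * Equiv.swap 0 2) = 1 := by decide
  simp only [e, es] at h
  simpa using h

lemma alt4_cyc123a {D : ℕ} (f : Fin D → Fin D → Fin D → Fin D → ℝ) (a b c d : Fin D) :
    alt4 (fun p q r s => f p r s q) a b c d = alt4 f a b c d := by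
  have h := alt4_perm f (Equiv.swap (1:Fin 4) 3 * Equiv.swap 1 2) a b c d
  have e : ∀ i : Fin 4, ((Equiv.swap (1:Fin 4) 3 * Equiv.swap 1 2 : Equiv.Perm (Fin 4))) i = ![0,2,3,1] i := by decide
  have es : Equiv.Perm.sign (Equiv.swap (1:Fin 4) 3 * Equiv.swap 1 2) = 1 := by decide
  simp only [e, es] at h
  simpa using h

lemma alt4_cyc123b {D : ℕ} (f : Fin D → Fin D → Fin D → Fin D → ℝ) (a b c d : Fin D) :
    alt4 (fun p q r s => f p s q r) a b c d = alt4 f a b c d := by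
  have h := alt4_perm f (Equiv.swap (1:Fin 4) 2 * Equiv.swap 1 3) a b c d
  have e : ∀ i : Fin 4, ((Equiv.swap (1:Fin 4) 2 * Equiv.swap 1 3 : Equiv.Perm (Fin 4))) i = ![0,3,1,2] i := by decide
  have es : Equiv.Perm.sign (Equiv.swap (1:Fin 4) 2 * Equiv.swap 1 3) = 1 := by decide
  simp only [e, es] at h
  simpa using h

lemma alt4_congr {D : ℕ} (f g : Fin D → Fin D → Fin D → Fin D → ℝ)
    (h : ∀ p q r s, f p q r s = g p q r s) (a b c d : Fin D) :
    alt4 f a b c d = alt4 g a b c d := by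
  have : f = g := funext fun p => funext fun q => funext fun r => funext fun s => h p q r s
  rw [this]

lemma alt4_neg {D : ℕ} (f : Fin D → Fin D → Fin D → Fin D → ℝ) (a b c d : Fin D) :
    alt4 (fun p q r s => -(f p q r s)) a b c d = - alt4 f a b c d := by
  unfold alt4
  rw [← mul_neg, ← Finset.sum_neg_distrib]
  congr 1
  apply Finset.sum_congr rfl
  intro σ _
  beta_reduce
  ring

lemma alt4_comb {D : ℕ} (f f1 f2 f3 f4 f5 f6 : Fin D → Fin D → Fin D → Fin D → ℝ)
    (hf : ∀ p q r s, f p q r s = (1/2) * (f1 p q r s + f2 p q r s + f3 p q r s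
      - f4 p q r s - f5 p q r s - f6 p q r s)) (a b c d : Fin D) :
    alt4 f a b c d = (1/2) * (alt4 f1 a b c d + alt4 f2 a b c d + alt4 f3 a b c d
      - alt4 f4 a b c d - alt4 f5 a b c d - alt4 f6 a b c d) := by
  unfold alt4
  simp only [hf]
  rw [show ∀ A B C A' B' C' : ℝ, (1:ℝ)/2 * (1/24 * A + 1/24 * B + 1/24 * C - 1/24 * A'
    - 1/24 * B' - 1/24 * C') = 1/24 * ((1/2) * (A + B + C - A' - B' - C')) from by intros; ring]
  congr 1
  rw [← Finset.sum_add_distrib, ← Finset.sum_add_distrib, ← Finset.sum_sub_distrib,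
    ← Finset.sum_sub_distrib, ← Finset.sum_sub_distrib, Finset.mul_sum]
  apply Finset.sum_congr rfl
  intro σ _
  ring

lemma alt4_add {D : ℕ} (f g : Fin D → Fin D → Fin D → Fin D → ℝ) (a b c d : Fin D) :
    alt4 (fun p q r s => f p q r s + g p q r s) a b c d = alt4 f a b c d + alt4 g a b c d := by
  unfold alt4
  rw [← mul_add, ← Finset.sum_add_distrib]
  congr 1
  apply Finset.sum_congr rfl
  intro σ _
  beta_reduce
  ring

theorem curvature_algebraic_bianchi_identity
    {D : ℕ} (T : (Fin D → ℝ) → Fin D → Fin D → Fin D → ℝ)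
    (hTsmooth : ∀ α β γ, ContDiff ℝ (⊤ : ℕ∞) (fun x => T x α β γ))
    (hTanti : ∀ x α β γ, T x α β γ = - T x β α γ)
    (hTalt : ∀ x α β γ, alt3 (T x) α β γ = 0)
    (F : (Fin D → ℝ) → Fin D → Fin D → Fin D → Fin D → ℝ)
    (hF : ∀ x α β γ δ, F x α β γ δ =
      pd α (fun y => T y β γ δ) x + pd β (fun y => T y γ α δ) x + pd γ (fun y => T y α β δ) x)
    (E : (Fin D → ℝ) → Fin D → Fin D → Fin D → Fin D → Fin D → ℝ)
    (hE : ∀ x α β γ ε δ, E x α β γ ε δ =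
      (1/2) * (pd ε (fun y => F y α β γ δ) x - pd δ (fun y => F y α β γ ε) x)) :
    ∀ x α β γ ε δ, alt4 (fun i j k l => E x i j k l δ) α β γ ε = 0 := by
  intro x α β γ ε δ
  have hS : ∀ b c d : Fin D, ContDiff ℝ (⊤ : ℕ∞) (fun y => T y b c d) := hTsmooth
  have hDT : ∀ (z : Fin D → ℝ) (b c d : Fin D), DifferentiableAt ℝ (fun y => T y b c d) z :=
    fun z b c d => ((hS b c d).differentiable (by simp)).differentiableAt
  have hD : ∀ (ν : Fin D) (b c d : Fin D) (z : Fin D → ℝ),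
      DifferentiableAt ℝ (pd ν (fun y => T y b c d)) z :=
    fun ν b c d z =>
      ((pd_smooth ν _ (hS b c d)).differentiable (by simp)).differentiableAt
  -- the basic second-derivative quantity
  set g : Fin D → Fin D → Fin D → Fin D → Fin D → ℝ :=
    fun μ ν b c d => pd μ (pd ν (fun y => T y b c d)) x with hgdef
  have hsym : ∀ μ ν b c d, g μ ν b c d = g ν μ b c d :=
    fun μ ν b c d => pd_comm μ ν _ (hS b c d) x
  have hanti : ∀ μ ν b c d, g μ ν b c d = - g μ ν c b d := by
    intro μ ν b c d
    have h1 : (pd ν (fun y => T y b c d)) = fun z => -(pd ν (fun y => T y c b d) z) := by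
      funext z
      have h2 : (fun y => T y b c d) = (fun y => -(T y c b d)) :=
        funext fun y => hTanti y b c d
      rw [h2, pd_neg]
    show pd μ (pd ν fun y => T y b c d) x = - pd μ (pd ν fun y => T y c b d) x
    rw [h1, pd_neg]
  have hcycT : ∀ (y : Fin D → ℝ) (b c d : Fin D), T y b c d + T y c d b + T y d b c = 0 := by
    intro y b c d
    have h := hTalt y b c d
    unfold alt3 at h
    have a1 := hTanti y c b d
    have a2 := hTanti y d c b
    have a3 := hTanti y b d c
    linarith
  have hcyc : ∀ μ ν b c d, g μ ν b c d = -(g μ ν c d b + g μ ν d b c) := by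
    intro μ ν b c d
    have h0 : (fun y => T y b c d) = fun y => -(T y c d b + T y d b c) := by
      funext y
      have := hcycT y b c d
      linarith
    have h1 : pd ν (fun y => T y b c d)
        = fun z => -(pd ν (fun y => T y c d b) z + pd ν (fun y => T y d b c) z) := by
      funext z
      rw [h0, pd_neg ν (fun y => T y c d b + T y d b c) z,
        pd_add ν _ _ z (hDT z c d b) (hDT z d b c)]
    show pd μ (pd ν fun y => T y b c d) x
        = -(pd μ (pd ν fun y => T y c d b) x + pd μ (pd ν fun y => T y d b c) x)
    rw [h1, pd_neg μ (fun z => pd ν (fun y => T y c d b) z + pd ν (fun y => T y d b c) z) x,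
      pd_add μ _ _ x (hD ν c d b x) (hD ν d b c x)]
  have hEg : ∀ i j k l, E x i j k l δ = (1/2) * (g l i j k δ + g l j k i δ + g l k i j δ
      - g δ i j k l - g δ j k i l - g δ k i j l) := by
    intro i j k l
    rw [hE x i j k l δ]
    have hF1 : (fun y => F y i j k δ) = (fun y => pd i (fun z => T z j k δ) y
        + pd j (fun z => T z k i δ) y + pd k (fun z => T z i j δ) y) :=
      funext fun y => hF y i j k δ
    have hF2 : (fun y => F y i j k l) = (fun y => pd i (fun z => T z j k l) y
        + pd j (fun z => T z k i l) y + pd k (fun z => T z i j l) y) :=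
      funext fun y => hF y i j k l
    rw [hF1, hF2,
      pd_add3 l _ _ _ x (hD i j k δ x) (hD j k i δ x) (hD k i j δ x),
      pd_add3 δ _ _ _ x (hD i j k l x) (hD j k i l x) (hD k i j l x)]
    show (1/2) * (pd l (pd i fun z => T z j k δ) x + pd l (pd j fun z => T z k i δ) x
        + pd l (pd k fun z => T z i j δ) x - (pd δ (pd i fun z => T z j k l) x
        + pd δ (pd j fun z => T z k i l) x + pd δ (pd k fun z => T z i j l) x))
      = (1/2) * (g l i j k δ + g l j k i δ + g l k i j δ
        - g δ i j k l - g δ j k i l - g δ k i j l)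
    simp only [hgdef]
    ring
  -- the six pieces
  have h0 := alt4_comb (fun i j k l => E x i j k l δ)
    (fun i j k l => g l i j k δ) (fun i j k l => g l j k i δ) (fun i j k l => g l k i j δ)
    (fun i j k l => g δ i j k l) (fun i j k l => g δ j k i l) (fun i j k l => g δ k i j l)
    hEg α β γ ε
  have hA1 : alt4 (fun i j k l => g l i j k δ) α β γ ε = 0 := by
    have h := alt4_swap03 (fun i j k l => g l i j k δ) α β γ ε
    have hfe : (fun p q r s => (fun i j k l => g l i j k δ) s q r p)
        = (fun i j k l => g l i j k δ) :=
      funext fun p => funext fun q => funext fun r => funext fun s => hsym p s q r δ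
    rw [hfe] at h
    linarith
  have hA2 : alt4 (fun i j k l => g l j k i δ) α β γ ε = 0 := by
    have h := alt4_swap13 (fun i j k l => g l j k i δ) α β γ ε
    have hfe : (fun p q r s => (fun i j k l => g l j k i δ) p s r q)
        = (fun i j k l => g l j k i δ) :=
      funext fun p => funext fun q => funext fun r => funext fun s => hsym q s r p δ
    rw [hfe] at h
    linarith
  have hA3 : alt4 (fun i j k l => g l k i j δ) α β γ ε = 0 := by
    have h := alt4_swap23 (fun i j k l => g l k i j δ) α β γ ε
    have hfe : (fun p q r s => (fun i j k l => g l k i j δ) p q s r)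
        = (fun i j k l => g l k i j δ) :=
      funext fun p => funext fun q => funext fun r => funext fun s => hsym r s p q δ
    rw [hfe] at h
    linarith
  have hA4 : alt4 (fun i j k l => g δ i j k l) α β γ ε = 0 := by
    have e1 : alt4 (fun i j k l => g δ i j k l) α β γ ε
        = alt4 (fun p q r s => -(g δ p r s q + g δ p s q r)) α β γ ε :=
      alt4_congr _ _ (fun p q r s => hcyc δ p q r s) α β γ ε
    have e2 := alt4_neg (fun p q r s => g δ p r s q + g δ p s q r) α β γ ε
    have e3 := alt4_add (fun p q r s => g δ p r s q) (fun p q r s => g δ p s q r) α β γ ε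
    have e4 := alt4_cyc123a (fun i j k l => g δ i j k l) α β γ ε
    have e5 := alt4_cyc123b (fun i j k l => g δ i j k l) α β γ ε
    beta_reduce at e2 e3 e4 e5
    linarith
  have hA5 : alt4 (fun i j k l => g δ j k i l) α β γ ε = 0 := by
    have e1 : alt4 (fun i j k l => g δ j k i l) α β γ ε
        = alt4 (fun p q r s => -(g δ q p r s)) α β γ ε :=
      alt4_congr _ _ (fun p q r s => hanti δ q r p s) α β γ ε
    have e2 := alt4_neg (fun p q r s => g δ q p r s) α β γ ε
    have e3 := alt4_swap01 (fun i j k l => g δ i j k l) α β γ ε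
    beta_reduce at e2 e3
    linarith
  have hA6 : alt4 (fun i j k l => g δ k i j l) α β γ ε = 0 := by
    have e3 := alt4_cyc012 (fun i j k l => g δ i j k l) α β γ ε
    beta_reduce at e3
    linarith
  rw [h0, hA1, hA2, hA3, hA4, hA5, hA6]
  ring
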